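/- Let n ≥ 3, let a_1,…,a_n be integers with a_i ≥ 2 for all i, and let 1 < s < n with a_s ≥ 3. Write p/q = [a_1,…,a_n], p_1/q_1 = [a_1,…,a_{s−1}], and p_2/q_2 = [a_{s+1},…,a_n], each as a fraction in lowest terms with p > q ≥ 1, p_1 > q_1 ≥ 1, p_2 > q_2 ≥ 1. Suppose p_1/(p_1−q_1) = [b_1,…,b_k] and p_2/(p_2−q_2) = [c_1,…,c_l] with all b_i ≥ 2 and all c_j ≥ 2. Then p/(p−q) = [b_1,…,b_{k−1}, b_k + 1, 2,…,2, c_1 + 1, c_2,…,c_l], where there are exactly a_s − 3 entries equal to 2 between b_k + 1 and c_1 + 1. -/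

import Mathlib

/-- Hirzebruch–Jung continued fraction `[x₁,…,x_r] = x₁ − 1/(x₂ − 1/(⋯ − 1/x_r))`. -/
def hjCF : List ℤ → ℚ
  | [] => 0
  | a :: l => (a : ℚ) - 1 / hjCF l

namespace HJAux

@[ext] structure M2 where
  a : ℤ
  b : ℤ
  c : ℤ
  d : ℤ

def hmul (x y : M2) : M2 :=
  ⟨x.a * y.a + x.b * y.c, x.a * y.b + x.b * y.d,
   x.c * y.a + x.d * y.c, x.c * y.b + x.d * y.d⟩

def mOf (x : ℤ) : M2 := ⟨x, -1, 1, 0⟩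

def dualM (x : M2) : M2 := ⟨x.a, -x.a - x.b, x.a - x.c, x.c + x.d - x.a - x.b⟩

def Um : M2 := ⟨1, 0, -1, 1⟩
def Um' : M2 := ⟨1, 1, 0, 1⟩
def Tm : M2 := ⟨1, 0, 1, -1⟩
def Km : M2 := ⟨1, -1, 0, -1⟩

def Wl : List ℤ → M2
  | [] => ⟨1, 0, 0, 1⟩
  | x :: t => hmul (mOf x) (Wl t)

lemma hmul_assoc (x y z : M2) : hmul (hmul x y) z = hmul x (hmul y z) := by
  ext <;> simp [hmul] <;> ring

lemma Wl_append (l m : List ℤ) : Wl (l ++ m) = hmul (Wl l) (Wl m) := by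
  induction l with
  | nil => ext <;> simp [Wl, hmul]
  | cons x t ih =>
    show hmul (mOf x) (Wl (t ++ m)) = hmul (hmul (mOf x) (Wl t)) (Wl m)
    rw [ih, hmul_assoc]

lemma Wl_single (x : ℤ) : Wl [x] = mOf x := by
  ext <;> simp [Wl, hmul, mOf]

lemma Wl_cons (x : ℤ) (t : List ℤ) :
    Wl (x :: t) = ⟨x * (Wl t).a - (Wl t).c, x * (Wl t).b - (Wl t).d, (Wl t).a, (Wl t).b⟩ := by
  show hmul (mOf x) (Wl t) = _
  ext <;> simp [hmul, mOf] <;> ring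

lemma Wl_replicate (m : ℕ) :
    Wl (List.replicate m (2 : ℤ)) = ⟨(m : ℤ) + 1, -(m : ℤ), (m : ℤ), 1 - (m : ℤ)⟩ := by
  induction m with
  | zero => ext <;> simp [Wl]
  | succ m ih =>
      rw [List.replicate_succ, Wl_cons, ih]
      ext <;> push_cast <;> ring

structure Inv (w : M2) : Prop where
  hc1 : 1 ≤ w.c
  hca : w.c < w.a
  hd0 : w.d ≤ 0
  hbd : w.b < w.d
  hba : -w.b < w.a
  hdc : -w.d < w.c
  hsum : w.d - w.b ≤ w.a - w.c
  hdet : w.a * w.d - w.b * w.c = 1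

lemma Wl_inv (l : List ℤ) (h2 : ∀ x ∈ l, 2 ≤ x) (hne : l ≠ []) : Inv (Wl l) := by
  induction l with
  | nil => exact absurd rfl hne
  | cons x t ih =>
    have hx : 2 ≤ x := h2 x List.mem_cons_self
    rcases eq_or_ne t [] with rfl | ht
    · rw [Wl_cons]
      show Inv ⟨x * 1 - 0, x * 0 - 1, 1, 0⟩
      refine ⟨?_, ?_, ?_, ?_, ?_, ?_, ?_, ?_⟩ <;> dsimp only <;> omega
    · have i := ih (fun y hy => h2 y (List.mem_cons_of_mem x hy)) ht
      rw [Wl_cons]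
      have q1 : 0 ≤ (x - 2) * (Wl t).a := mul_nonneg (by linarith) (by linarith [i.hc1, i.hca])
      have q2 : 0 ≤ (x - 2) * (-(Wl t).b) := mul_nonneg (by linarith) (by linarith [i.hbd, i.hd0])
      have q3 : 0 ≤ (x - 2) * ((Wl t).a + (Wl t).b) := mul_nonneg (by linarith) (by linarith [i.hba])
      refine ⟨?_, ?_, ?_, ?_, ?_, ?_, ?_, ?_⟩ <;> dsimp only
      · linarith [i.hc1, i.hca]
      · nlinarith [q1, i.hc1, i.hca]
      · linarith [i.hbd, i.hd0]
      · nlinarith [q2, i.hbd, i.hd0]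
      · nlinarith [q3, i.hba, i.hsum]
      · exact i.hba
      · nlinarith [q3, i.hsum, i.hba]
      · linear_combination i.hdet

lemma Wl_val (l : List ℤ) (h2 : ∀ x ∈ l, 2 ≤ x) :
    0 ≤ (Wl l).c ∧ (Wl l).c < (Wl l).a ∧ hjCF l = ((Wl l).a : ℚ) / ((Wl l).c : ℚ) := by
  induction l with
  | nil => norm_num [Wl, hjCF]
  | cons x t ih =>
    obtain ⟨h0, hca, hval⟩ := ih (fun y hy => h2 y (List.mem_cons_of_mem x hy))
    have hx : 2 ≤ x := h2 x List.mem_cons_self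
    have ha1 : 1 ≤ (Wl t).a := by linarith
    have q1 : 0 ≤ (x - 2) * (Wl t).a := mul_nonneg (by linarith) (by linarith)
    rw [Wl_cons]
    refine ⟨?_, ?_, ?_⟩ <;> dsimp only
    · linarith
    · nlinarith
    · have haQ : ((Wl t).a : ℚ) ≠ 0 := Int.cast_ne_zero.mpr (by omega)
      show hjCF (x :: t) = _
      rw [show hjCF (x :: t) = (x : ℚ) - 1 / hjCF t from rfl, hval, one_div_div]
      push_cast
      field_simp

lemma rat_unique (x y x' y' : ℤ) (hx : 1 ≤ x) (hy : 1 ≤ y) (hx' : 1 ≤ x') (hy' : 1 ≤ y')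
    (hcop : IsCoprime x y) (hcop' : IsCoprime x' y')
    (h : (x : ℚ) / (y : ℚ) = (x' : ℚ) / (y' : ℚ)) : x = x' ∧ y = y' := by
  have hy0 : (y : ℚ) ≠ 0 := Int.cast_ne_zero.mpr (by omega)
  have hy0' : (y' : ℚ) ≠ 0 := Int.cast_ne_zero.mpr (by omega)
  have cross : x * y' = x' * y := by
    have h2 := (div_eq_div_iff hy0 hy0').mp h
    exact_mod_cast h2
  have d1 : y ∣ y' := (hcop.symm).dvd_of_dvd_mul_left ⟨x', by linear_combination cross⟩
  have d2 : y' ∣ y := (hcop'.symm).dvd_of_dvd_mul_left ⟨x, by linear_combination -cross⟩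
  have hyy : y = y' := Int.dvd_antisymm (by omega) (by omega) d1 d2
  refine ⟨?_, hyy⟩
  rw [← hyy] at cross
  exact mul_right_cancel₀ (by omega : y ≠ 0) cross

lemma identify (L : List ℤ) (h2 : ∀ x ∈ L, 2 ≤ x) (hne : L ≠ []) (x y : ℤ)
    (hy : 1 ≤ y) (hxy : y < x) (hcop : IsCoprime x y)
    (hval : (x : ℚ) / (y : ℚ) = hjCF L) : (Wl L).a = x ∧ (Wl L).c = y := by
  obtain ⟨h0, hca, hv⟩ := Wl_val L h2
  have inv := Wl_inv L h2 hne
  have copW : IsCoprime (Wl L).a (Wl L).c := ⟨(Wl L).d, -(Wl L).b, by linear_combination inv.hdet⟩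
  exact rat_unique (Wl L).a (Wl L).c x y (by linarith [inv.hc1, inv.hca]) inv.hc1
    (by linarith) hy copW hcop (by rw [← hv]; exact hval.symm)

lemma col2_unique (P Q R S R' S' : ℤ) (hQ1 : 1 ≤ Q) (hQP : Q < P)
    (h1 : Q * R - P * S = 1) (h2 : Q * R' - P * S' = 1)
    (hR1 : 1 ≤ R) (hRP : R < P) (hR'1 : 1 ≤ R') (hR'P : R' < P) :
    R = R' ∧ S = S' := by
  have hP : 0 < P := by omega
  have hcop : IsCoprime P Q := ⟨-S, R, by linear_combination h1⟩
  have hdvd : P ∣ Q * (R - R') := ⟨S - S', by linear_combination h1 - h2⟩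
  obtain ⟨t, ht⟩ := hcop.dvd_of_dvd_mul_left hdvd
  have htz : t = 0 := by
    rcases lt_trichotomy t 0 with hlt | h0 | hgt
    · have h1' : t ≤ -1 := by omega
      have h2' : P * t ≤ P * (-1) := mul_le_mul_of_nonneg_left h1' hP.le
      nlinarith
    · exact h0
    · have h1' : 1 ≤ t := by omega
      have h2' : P * 1 ≤ P * t := mul_le_mul_of_nonneg_left h1' hP.le
      nlinarith
  rw [htz, mul_zero] at ht
  have hRR : R = R' := by omega
  refine ⟨hRR, ?_⟩
  have hps : P * S = P * S' := by linear_combination -h1 + h2 + Q * hRR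
  exact mul_left_cancel₀ (by omega : P ≠ 0) hps

lemma dualEq (l m : List ℤ) (hl2 : ∀ x ∈ l, 2 ≤ x) (hm2 : ∀ x ∈ m, 2 ≤ x)
    (hl : l ≠ []) (hm : m ≠ [])
    (hA : (Wl m).a = (Wl l).a) (hC : (Wl m).c = (Wl l).a - (Wl l).c) :
    Wl m = dualM (Wl l) := by
  have il := Wl_inv l hl2 hl
  have im := Wl_inv m hm2 hm
  have h := col2_unique (Wl l).a ((Wl l).a - (Wl l).c) (-(Wl m).b) (-(Wl m).d)
      ((Wl l).a + (Wl l).b) ((Wl l).a + (Wl l).b - (Wl l).c - (Wl l).d)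
      (by linarith [il.hca])
      (by linarith [il.hc1])
      (by rw [← hC, ← hA]; linear_combination im.hdet)
      (by linear_combination il.hdet)
      (by linarith [im.hbd, im.hd0])
      (by rw [← hA]; exact im.hba)
      (by linarith [il.hba])
      (by linarith [il.hbd, il.hd0])
  have hb' : (Wl m).b = -(Wl l).a - (Wl l).b := by linarith [h.1]
  have hd' : (Wl m).d = (Wl l).c + (Wl l).d - (Wl l).a - (Wl l).b := by linarith [h.2]
  ext <;> simp only [dualM]
  exacts [hA, hb', hC, hd']

lemma key2 (X Y XA YC : M2) (bl c0 μ : ℤ)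
    (hX : hmul X (mOf bl) = dualM XA)
    (hY : hmul (mOf c0) Y = dualM YC) :
    hmul (hmul (hmul (hmul X (mOf (bl + 1))) ⟨μ + 1, -μ, μ, 1 - μ⟩) (mOf (c0 + 1))) Y
      = hmul Tm (hmul (hmul (hmul XA (mOf (μ + 3))) YC) Km) := by
  have e1 : hmul (hmul (hmul (hmul X (mOf (bl + 1))) ⟨μ + 1, -μ, μ, 1 - μ⟩) (mOf (c0 + 1))) Y
      = hmul (hmul (hmul (hmul (hmul X (mOf bl)) Um) ⟨μ + 1, -μ, μ, 1 - μ⟩) Um')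
          (hmul (mOf c0) Y) := by
    ext <;> simp [hmul, mOf, Um, Um'] <;> ring
  rw [e1, hX, hY]
  ext <;> simp [hmul, dualM, mOf, Um, Um', Tm, Km] <;> ring

lemma TmKm_a (Z : M2) : (hmul Tm (hmul Z Km)).a = Z.a := by
  simp [hmul, Tm, Km]

lemma TmKm_c (Z : M2) : (hmul Tm (hmul Z Km)).c = Z.a - Z.c := by
  simp [hmul, Tm, Km]; ring

end HJAux

open HJAux

/-- Indices are 0-based: the chain is `a 0, …, a (n-1)`, the removed entry is `a s`
with `1 ≤ s ≤ n - 2` (i.e. `1 < s < n` in 1-based indexing). -/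
theorem stmt2 (n : ℕ) (hn : 3 ≤ n) (a : ℕ → ℤ) (ha : ∀ i < n, 2 ≤ a i)
    (s : ℕ) (hs1 : 1 ≤ s) (hs2 : s ≤ n - 2) (has : 3 ≤ a s)
    (p q p₁ q₁ p₂ q₂ : ℕ)
    (hpq : Nat.Coprime p q) (hq : 1 ≤ q) (hqp : q < p)
    (hp₁q₁ : Nat.Coprime p₁ q₁) (hq₁ : 1 ≤ q₁) (hq₁p₁ : q₁ < p₁)
    (hp₂q₂ : Nat.Coprime p₂ q₂) (hq₂ : 1 ≤ q₂) (hq₂p₂ : q₂ < p₂)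
    (hpqv : (p : ℚ) / q = hjCF ((List.range n).map fun i => a i))
    (hp1v : (p₁ : ℚ) / q₁ = hjCF ((List.range s).map fun i => a i))
    (hp2v : (p₂ : ℚ) / q₂ = hjCF ((List.range (n - s - 1)).map fun i => a (s + 1 + i)))
    (k l : ℕ) (hk : 1 ≤ k) (hl : 1 ≤ l)
    (b c : ℕ → ℤ) (hb : ∀ i < k, 2 ≤ b i) (hc : ∀ i < l, 2 ≤ c i)
    (hbv : (p₁ : ℚ) / ((p₁ : ℚ) - q₁) = hjCF ((List.range k).map fun i => b i))
    (hcv : (p₂ : ℚ) / ((p₂ : ℚ) - q₂) = hjCF ((List.range l).map fun i => c i)) :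
    (p : ℚ) / ((p : ℚ) - q) =
      hjCF ((List.range (k - 1)).map (fun i => b i) ++ [b (k - 1) + 1] ++
        List.replicate ((a s).toNat - 3) (2 : ℤ) ++ [c 0 + 1] ++
        (List.range (l - 1)).map fun i => c (i + 1)) := by
  set m3 : ℕ := (a s).toNat - 3 with hm3
  set LA : List ℤ := (List.range s).map (fun i => a i) with hLA
  set LC : List ℤ := (List.range (n - s - 1)).map (fun i => a (s + 1 + i)) with hLC
  set LB : List ℤ := (List.range k).map (fun i => b i) with hLB
  set LD : List ℤ := (List.range l).map (fun i => c i) with hLD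
  set LF : List ℤ := (List.range n).map (fun i => a i) with hLF
  -- entry bounds
  have hA2 : ∀ x ∈ LA, 2 ≤ x := by
    rw [hLA]; intro x hx
    simp only [List.mem_map, List.mem_range] at hx
    obtain ⟨i, hi, rfl⟩ := hx
    exact ha i (by omega)
  have hC2 : ∀ x ∈ LC, 2 ≤ x := by
    rw [hLC]; intro x hx
    simp only [List.mem_map, List.mem_range] at hx
    obtain ⟨i, hi, rfl⟩ := hx
    exact ha _ (by omega)
  have hF2 : ∀ x ∈ LF, 2 ≤ x := by
    rw [hLF]; intro x hx
    simp only [List.mem_map, List.mem_range] at hx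
    obtain ⟨i, hi, rfl⟩ := hx
    exact ha i hi
  have hB2 : ∀ x ∈ LB, 2 ≤ x := by
    rw [hLB]; intro x hx
    simp only [List.mem_map, List.mem_range] at hx
    obtain ⟨i, hi, rfl⟩ := hx
    exact hb i hi
  have hD2 : ∀ x ∈ LD, 2 ≤ x := by
    rw [hLD]; intro x hx
    simp only [List.mem_map, List.mem_range] at hx
    obtain ⟨i, hi, rfl⟩ := hx
    exact hc i hi
  -- nonemptiness
  have hAne : LA ≠ [] := by
    rw [hLA]; simp only [ne_eq, List.map_eq_nil_iff, List.range_eq_nil]; omega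
  have hCne : LC ≠ [] := by
    rw [hLC]; simp only [ne_eq, List.map_eq_nil_iff, List.range_eq_nil]; omega
  have hFne : LF ≠ [] := by
    rw [hLF]; simp only [ne_eq, List.map_eq_nil_iff, List.range_eq_nil]; omega
  have hBne : LB ≠ [] := by
    rw [hLB]; simp only [ne_eq, List.map_eq_nil_iff, List.range_eq_nil]; omega
  have hDne : LD ≠ [] := by
    rw [hLD]; simp only [ne_eq, List.map_eq_nil_iff, List.range_eq_nil]; omega
  -- identifications
  have idF := identify LF hF2 hFne (p : ℤ) (q : ℤ) (by omega) (by omega)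
    (Nat.isCoprime_iff_coprime.mpr hpq) (by push_cast; exact hpqv)
  have idA := identify LA hA2 hAne (p₁ : ℤ) (q₁ : ℤ) (by omega) (by omega)
    (Nat.isCoprime_iff_coprime.mpr hp₁q₁) (by push_cast; exact hp1v)
  have idC := identify LC hC2 hCne (p₂ : ℤ) (q₂ : ℤ) (by omega) (by omega)
    (Nat.isCoprime_iff_coprime.mpr hp₂q₂) (by push_cast; exact hp2v)
  have copB : IsCoprime ((p₁ : ℤ)) ((p₁ : ℤ) - (q₁ : ℤ)) := by
    obtain ⟨u, v, huv⟩ := Nat.isCoprime_iff_coprime.mpr hp₁q₁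
    exact ⟨u + v, -v, by linear_combination huv⟩
  have copD : IsCoprime ((p₂ : ℤ)) ((p₂ : ℤ) - (q₂ : ℤ)) := by
    obtain ⟨u, v, huv⟩ := Nat.isCoprime_iff_coprime.mpr hp₂q₂
    exact ⟨u + v, -v, by linear_combination huv⟩
  have idB := identify LB hB2 hBne (p₁ : ℤ) ((p₁ : ℤ) - (q₁ : ℤ)) (by omega) (by omega)
    copB (by push_cast; exact hbv)
  have idD := identify LD hD2 hDne (p₂ : ℤ) ((p₂ : ℤ) - (q₂ : ℤ)) (by omega) (by omega)
    copD (by push_cast; exact hcv)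
  -- duality
  have hdB : Wl LB = dualM (Wl LA) := dualEq LA LB hA2 hB2 hAne hBne
    (by rw [idB.1, idA.1]) (by rw [idB.2, idA.1, idA.2])
  have hdD : Wl LD = dualM (Wl LC) := dualEq LC LD hC2 hD2 hCne hDne
    (by rw [idD.1, idC.1]) (by rw [idD.2, idC.1, idC.2])
  -- list decompositions
  have hLBd : LB = ((List.range (k - 1)).map (fun i => b i)) ++ [b (k - 1)] := by
    rw [hLB]
    conv_lhs => rw [show k = (k - 1) + 1 from by omega]
    rw [List.range_succ, List.map_append, List.map_singleton]
  have hLDd : LD = c 0 :: ((List.range (l - 1)).map (fun i => c (i + 1))) := by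
    rw [hLD]
    conv_lhs => rw [show l = 1 + (l - 1) from by omega]
    rw [List.range_add]
    simp only [List.range_succ, List.range_zero, List.nil_append, List.map_cons, List.map_nil,
      List.map_map, List.map_append, List.singleton_append, Function.comp_def]
    congr 1
    apply List.map_congr_left
    intro i _
    congr 1
    omega
  have hLFd : LF = (LA ++ [a s]) ++ LC := by
    rw [hLF, hLA, hLC]
    conv_lhs => rw [show n = (s + 1) + (n - s - 1) from by omega]
    rw [List.range_add, List.map_append, List.range_succ, List.map_append,
      List.map_singleton, List.map_map]
    simp only [Function.comp_def]
  -- W equations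
  have eB : hmul (Wl ((List.range (k - 1)).map (fun i => b i))) (mOf (b (k - 1)))
      = dualM (Wl LA) := by
    rw [← Wl_single (b (k - 1)), ← Wl_append, ← hLBd, hdB]
  have eD : hmul (mOf (c 0)) (Wl ((List.range (l - 1)).map (fun i => c (i + 1))))
      = dualM (Wl LC) := by
    have h0 : Wl LD = hmul (mOf (c 0)) (Wl ((List.range (l - 1)).map (fun i => c (i + 1)))) := by
      rw [hLDd]; rfl
    rw [← h0, hdD]
  -- key computation
  have hμ : (m3 : ℤ) + 3 = a s := by omega
  have step1 : Wl ((List.range (k - 1)).map (fun i => b i) ++ [b (k - 1) + 1] ++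
        List.replicate m3 (2 : ℤ) ++ [c 0 + 1] ++
        (List.range (l - 1)).map (fun i => c (i + 1)))
      = hmul Tm (hmul (hmul (hmul (Wl LA) (mOf ((m3 : ℤ) + 3))) (Wl LC)) Km) := by
    rw [Wl_append, Wl_append, Wl_append, Wl_append, Wl_single, Wl_single, Wl_replicate]
    exact key2 _ _ _ _ _ _ _ eB eD
  have step2 : hmul (hmul (Wl LA) (mOf ((m3 : ℤ) + 3))) (Wl LC) = Wl LF := by
    rw [hμ, hLFd, Wl_append, Wl_append, Wl_single]
  -- entries of the RHS list
  have hR2 : ∀ x ∈ ((List.range (k - 1)).map (fun i => b i) ++ [b (k - 1) + 1] ++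
        List.replicate m3 (2 : ℤ) ++ [c 0 + 1] ++
        (List.range (l - 1)).map (fun i => c (i + 1))), 2 ≤ x := by
    intro x hx
    simp only [List.mem_append, List.mem_map, List.mem_range, List.mem_singleton,
      List.mem_replicate, ne_eq] at hx
    rcases hx with ((((⟨i, hi, rfl⟩ | rfl) | ⟨-, rfl⟩) | rfl) | ⟨i, hi, rfl⟩)
    · exact hb i (by omega)
    · have := hb (k - 1) (by omega); omega
    · omega
    · have := hc 0 (by omega); omega
    · exact hc (i + 1) (by omega)
  obtain ⟨hR0, hRca, hRval⟩ := Wl_val _ hR2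
  rw [hRval, step1, step2, TmKm_a, TmKm_c, idF.1, idF.2]
  push_cast
  ring
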